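/- Let F = (F₁,F₂,F₃) : U ⊆ ℝ³ → ℝ³ be smooth with F(x₁,0,0) = (λ₁x₁,0,0), ∂₂F₂(x₁,0,0) = λ₂, ∂₃F₃(x₁,0,0) = λ₃, ∂₂F₃(x₁,0,0) = 0, and ∂₃^i F₂(x₁,0,0) = 0 for 1 ≤ i ≤ ℓ. Let γ(t) = (x₁ + O(t), b·t^{ℓ+1} + O(t^{ℓ+2}), c·t + O(t²)) be a smooth curve. Then F ∘ γ, after the reparametrization matching its form, equals (λ₁x₁ + O(t), b'·t^{ℓ+1} + O(t^{ℓ+2}), c'·t + O(t²)) with (b', (c')^{ℓ+1}) = (λ₂·b + (1/(ℓ+1)!)·∂₃^{ℓ+1}F₂(x₁,0,0)·c^{ℓ+1}, λ₃^{ℓ+1}·c^{ℓ+1}); i.e., the induced action on the pair (b, c^{ℓ+1}) is the upper-triangular linear map [[λ₂, (1/(ℓ+1)!)∂₃^{ℓ+1}F₂(x₁,0,0)], [0, λ₃^{ℓ+1}]]. -/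

import Mathlib

open Asymptotics Filter Metric Set


/-- Parametric derivative of a smooth family is jointly smooth. -/
lemma aux_deriv_smooth {E : Type*} [NormedAddCommGroup E] [NormedSpace ℝ E]
    (H : E → ℝ → ℝ) (hH : ContDiff ℝ (⊤ : ℕ∞) (fun p : E × ℝ => H p.1 p.2)) :
    ContDiff ℝ (⊤ : ℕ∞) (fun p : E × ℝ => deriv (H p.1) p.2) := by
  have key : ∀ p : E × ℝ, deriv (H p.1) p.2
      = fderiv ℝ (fun q : E × ℝ => H q.1 q.2) p ((0 : E), (1 : ℝ)) := by
    intro p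
    have h1 : HasDerivAt (fun z : ℝ => ((p.1, z) : E × ℝ)) ((0 : E), (1 : ℝ)) p.2 :=
      (hasDerivAt_const p.2 p.1).prodMk (hasDerivAt_id p.2)
    have h2 := ((hH.differentiable (by simp)) p).hasFDerivAt
    exact (h2.comp_hasDerivAt p.2 h1).deriv
  have h3 : ContDiff ℝ (⊤ : ℕ∞)
      (fun p : E × ℝ => fderiv ℝ (fun q : E × ℝ => H q.1 q.2) p ((0 : E), (1 : ℝ))) :=
    (hH.fderiv_right (by simp)).clm_apply contDiff_const
  have : (fun p : E × ℝ => deriv (H p.1) p.2)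
      = fun p : E × ℝ => fderiv ℝ (fun q : E × ℝ => H q.1 q.2) p ((0 : E), (1 : ℝ)) :=
    funext key
  rw [this]; exact h3

lemma aux_iteratedDeriv_smooth {E : Type*} [NormedAddCommGroup E] [NormedSpace ℝ E]
    (i : ℕ) :
    ∀ H : E → ℝ → ℝ, ContDiff ℝ (⊤ : ℕ∞) (fun p : E × ℝ => H p.1 p.2) →
    ContDiff ℝ (⊤ : ℕ∞) (fun p : E × ℝ => iteratedDeriv i (H p.1) p.2) := by
  induction i with
  | zero => intro H hH; simpa [iteratedDeriv_zero] using hH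
  | succ n ih =>
    intro H hH
    have := ih (fun x z => deriv (H x) z) (aux_deriv_smooth H hH)
    simpa [iteratedDeriv_succ'] using this

/-- Uniform vanishing-jet bound with parameters. -/
lemma aux_bound {E : Type*} [NormedAddCommGroup E] [NormedSpace ℝ E] [ProperSpace E]
    (n : ℕ) :
    ∀ H : E → ℝ → ℝ, ContDiff ℝ (⊤ : ℕ∞) (fun p : E × ℝ => H p.1 p.2) →
    ∀ (p₀ : E) (ε₀ : ℝ), 0 < ε₀ →
    (∀ p ∈ closedBall p₀ ε₀, ∀ i ≤ n, iteratedDeriv i (H p) 0 = 0) →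
    ∃ C : ℝ, ∃ δ : ℝ, 0 < δ ∧ δ ≤ ε₀ ∧
      ∀ p ∈ closedBall p₀ δ, ∀ z : ℝ, |z| ≤ δ → |H p z| ≤ C * |z| ^ (n + 1) := by
  induction n with
  | zero =>
    intro H hH p₀ ε₀ hε₀ hvan
    have hDc : Continuous (fun p : E × ℝ => deriv (H p.1) p.2) :=
      (aux_deriv_smooth H hH).continuous
    obtain ⟨M, hM⟩ := (isCompact_closedBall (p₀, (0 : ℝ)) ε₀).exists_bound_of_continuousOn
      hDc.continuousOn
    refine ⟨max M 0, ε₀, hε₀, le_rfl, ?_⟩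
    intro p hp z hz
    have h0 : H p 0 = 0 := by simpa [iteratedDeriv_zero] using hvan p hp 0 le_rfl
    have hdiff : ∀ x ∈ closedBall (0 : ℝ) ε₀, DifferentiableAt ℝ (H p) x := by
      intro x _
      have : ContDiff ℝ (⊤ : ℕ∞) (fun z : ℝ => H p z) :=
        hH.comp ((contDiff_const (c := p)).prodMk contDiff_id)
      exact (this.differentiable (by simp)).differentiableAt
    have hbound : ∀ x ∈ closedBall (0 : ℝ) ε₀, ‖deriv (H p) x‖ ≤ max M 0 := by
      intro x hx
      have hmem : (p, x) ∈ closedBall (p₀, (0 : ℝ)) ε₀ := by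
        rw [Metric.mem_closedBall, Prod.dist_eq]
        exact max_le (Metric.mem_closedBall.mp hp) (Metric.mem_closedBall.mp hx)
      exact (hM (p, x) hmem).trans (le_max_left _ _)
    have hz' : z ∈ closedBall (0 : ℝ) ε₀ := by
      rw [Metric.mem_closedBall, Real.dist_eq, sub_zero]; exact hz
    have h00 : (0 : ℝ) ∈ closedBall (0 : ℝ) ε₀ := Metric.mem_closedBall_self hε₀.le
    have := Convex.norm_image_sub_le_of_norm_deriv_le hdiff hbound
      (convex_closedBall (0 : ℝ) ε₀) h00 hz'
    rw [h0, sub_zero, sub_zero, Real.norm_eq_abs, Real.norm_eq_abs] at this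
    simpa [pow_one] using this
  | succ n ih =>
    intro H hH p₀ ε₀ hε₀ hvan
    obtain ⟨C, δ, hδ, hδε, hbd⟩ := ih (fun x z => deriv (H x) z) (aux_deriv_smooth H hH) p₀ ε₀ hε₀
      (by
        intro p hp i hi
        have := hvan p hp (i + 1) (Nat.succ_le_succ hi)
        rw [iteratedDeriv_succ'] at this
        exact this)
    refine ⟨max C 0, δ, hδ, hδε, ?_⟩
    intro p hp z hz
    have h0 : H p 0 = 0 := by
      simpa [iteratedDeriv_zero] using
        hvan p (closedBall_subset_closedBall hδε hp) 0 (Nat.zero_le _)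
    have hdiff : ∀ x ∈ closedBall (0 : ℝ) |z|, DifferentiableAt ℝ (H p) x := by
      intro x _
      have : ContDiff ℝ (⊤ : ℕ∞) (fun z : ℝ => H p z) :=
        hH.comp ((contDiff_const (c := p)).prodMk contDiff_id)
      exact (this.differentiable (by simp)).differentiableAt
    have hbound : ∀ x ∈ closedBall (0 : ℝ) |z|,
        ‖deriv (H p) x‖ ≤ max C 0 * |z| ^ (n + 1) := by
      intro x hx
      have hx' : |x| ≤ |z| := by
        rw [Metric.mem_closedBall, Real.dist_eq, sub_zero] at hx; exact hx
      have h1 : |deriv (H p) x| ≤ C * |x| ^ (n + 1) := hbd p hp x (hx'.trans hz)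
      have h2 : C * |x| ^ (n + 1) ≤ max C 0 * |z| ^ (n + 1) := by
        rcases le_or_gt C 0 with hC | hC
        · have : C * |x| ^ (n + 1) ≤ 0 :=
            mul_nonpos_of_nonpos_of_nonneg hC (pow_nonneg (abs_nonneg _) _)
          exact this.trans (mul_nonneg (le_max_right _ _) (pow_nonneg (abs_nonneg _) _))
        · have := pow_le_pow_left₀ (abs_nonneg x) hx' (n + 1)
          calc C * |x| ^ (n + 1) ≤ C * |z| ^ (n + 1) := by
                exact mul_le_mul_of_nonneg_left this hC.le
            _ ≤ max C 0 * |z| ^ (n + 1) :=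
                mul_le_mul_of_nonneg_right (le_max_left _ _)
                  (pow_nonneg (abs_nonneg _) _)
      exact (Real.norm_eq_abs _ ▸ h1).trans h2
    have h00 : (0 : ℝ) ∈ closedBall (0 : ℝ) |z| := Metric.mem_closedBall_self (abs_nonneg z)
    have hz' : z ∈ closedBall (0 : ℝ) |z| := by
      rw [Metric.mem_closedBall, Real.dist_eq, sub_zero]
    have hm := Convex.norm_image_sub_le_of_norm_deriv_le hdiff hbound
      (convex_closedBall (0 : ℝ) |z|) h00 hz'
    rw [h0, sub_zero, sub_zero, Real.norm_eq_abs, Real.norm_eq_abs] at hm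
    calc |H p z| ≤ max C 0 * |z| ^ (n + 1) * |z| := hm
      _ = max C 0 * |z| ^ (n + 1 + 1) := by ring

lemma aux_monomial (w : ℝ) (m : ℕ) : ∀ i : ℕ, iteratedDeriv i (fun z : ℝ => w * z ^ m)
    = fun z : ℝ => w * (m.descFactorial i : ℝ) * z ^ (m - i) := by
  intro i; induction i with
  | zero => funext z; simp
  | succ i ih =>
    funext z
    rw [iteratedDeriv_succ, ih]
    have hd : deriv (fun z : ℝ => w * (m.descFactorial i : ℝ) * z ^ (m - i)) z
        = w * (m.descFactorial i : ℝ) * ((m - i : ℕ) * z ^ (m - i - 1)) := by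
      rw [deriv_const_mul _ (differentiable_pow _).differentiableAt, deriv_pow_field]
    rw [hd, Nat.descFactorial_succ, Nat.sub_sub]
    push_cast
    ring

lemma aux_iteratedDeriv_sub (f g : ℝ → ℝ) (hf : ContDiff ℝ (⊤ : ℕ∞) f)
    (hg : ContDiff ℝ (⊤ : ℕ∞) g) (n : ℕ) (x : ℝ) :
    iteratedDeriv n (fun z => f z - g z) x = iteratedDeriv n f x - iteratedDeriv n g x := by
  have : (fun z => f z - g z) = f - g := rfl
  rw [this, ← iteratedDerivWithin_univ, ← iteratedDerivWithin_univ, ← iteratedDerivWithin_univ]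
  exact iteratedDerivWithin_sub (Set.mem_univ x) uniqueDiffOn_univ
    (hf.contDiffWithinAt.of_le (by exact_mod_cast le_top)) (hg.contDiffWithinAt.of_le (by exact_mod_cast le_top))

lemma aux_pow_isBigO {k m : ℕ} (h : k ≤ m) :
    (fun t : ℝ => t ^ m) =O[nhds 0] fun t : ℝ => t ^ k := by
  apply IsBigO.of_bound 1
  have hev : ∀ᶠ t : ℝ in nhds 0, |t| ≤ 1 := by
    have h1 : Metric.closedBall (0 : ℝ) 1 ∈ nhds (0 : ℝ) :=
      Metric.closedBall_mem_nhds (0 : ℝ) one_pos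
    filter_upwards [h1] with t ht
    rw [Metric.mem_closedBall, Real.dist_eq, sub_zero] at ht; exact ht
  filter_upwards [hev] with t ht
  rw [Real.norm_eq_abs, Real.norm_eq_abs, abs_pow, abs_pow, one_mul]
  exact pow_le_pow_of_le_one (abs_nonneg t) ht h

lemma aux_isBigO_id (f : ℝ → ℝ) (hf : DifferentiableAt ℝ f 0) :
    (fun t => f t - f 0) =O[nhds 0] fun t : ℝ => t := by
  simpa using hf.isBigO_sub

lemma aux_pow_curve (u : ℝ → ℝ) (a : ℝ) (hu : u =O[nhds 0] fun t : ℝ => t)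
    (h : (fun t => u t - a * t) =O[nhds 0] fun t : ℝ => t ^ 2) (k : ℕ) :
    (fun t => u t ^ k - a ^ k * t ^ k) =O[nhds 0] fun t : ℝ => t ^ (k + 1) := by
  induction k with
  | zero =>
    have : (fun t : ℝ => u t ^ 0 - a ^ 0 * t ^ 0) = fun _ : ℝ => (0 : ℝ) := by
      funext t; ring
    rw [this]; exact isBigO_zero _ _
  | succ k ih =>
    have key : (fun t : ℝ => u t ^ (k + 1) - a ^ (k + 1) * t ^ (k + 1))
        = fun t => u t ^ k * (u t - a * t) + (a * t) * (u t ^ k - a ^ k * t ^ k) := by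
      funext t; ring
    rw [key]
    have h1 : (fun t : ℝ => u t ^ k * (u t - a * t)) =O[nhds 0]
        fun t : ℝ => t ^ (k + 1 + 1) := by
      have := (hu.pow k).mul h
      refine this.trans (IsBigO.of_bound 1 ?_)
      filter_upwards with t
      rw [one_mul, ← pow_add]
    have h2 : (fun t : ℝ => (a * t) * (u t ^ k - a ^ k * t ^ k)) =O[nhds 0]
        fun t : ℝ => t ^ (k + 1 + 1) := by
      have ha : (fun t : ℝ => a * t) =O[nhds 0] fun t : ℝ => t :=
        (isBigO_refl _ _).const_mul_left a
      have := ha.mul ih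
      refine this.trans (IsBigO.of_bound 1 ?_)
      filter_upwards with t
      rw [one_mul, ← pow_succ']
    exact h1.add h2

/-- The action on `(ℓ+1)`-jets of curves (Proposition 3.13): in `ℓ`-good
chart coordinates the dynamics sends a curve of the special form with jet
data `(b, c)` to a curve of the same form with jet data
`(λ₂·b + (1/(ℓ+1)!)·∂₃^{ℓ+1}F₂(x₁,0,0)·c^{ℓ+1}, λ₃·c)`. -/
theorem stmt_19 (ℓ : ℕ) (lam₁ lam₂ lam₃ : ℝ)
    (F₁ F₂ F₃ : ℝ → ℝ → ℝ → ℝ)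
    (hsmooth : ContDiff ℝ (⊤ : ℕ∞)
      (fun p : ℝ × ℝ × ℝ => (F₁ p.1 p.2.1 p.2.2, F₂ p.1 p.2.1 p.2.2, F₃ p.1 p.2.1 p.2.2)))
    (haxis₁ : ∀ x ∈ Set.Ioo (-1 : ℝ) 1, F₁ x 0 0 = lam₁ * x)
    (haxis₂ : ∀ x ∈ Set.Ioo (-1 : ℝ) 1, F₂ x 0 0 = 0)
    (haxis₃ : ∀ x ∈ Set.Ioo (-1 : ℝ) 1, F₃ x 0 0 = 0)
    (h22 : ∀ x ∈ Set.Ioo (-1 : ℝ) 1, deriv (fun y => F₂ x y 0) 0 = lam₂)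
    (h33 : ∀ x ∈ Set.Ioo (-1 : ℝ) 1, deriv (fun z => F₃ x 0 z) 0 = lam₃)
    (h23 : ∀ x ∈ Set.Ioo (-1 : ℝ) 1, deriv (fun y => F₃ x y 0) 0 = 0)
    (hvan : ∀ x ∈ Set.Ioo (-1 : ℝ) 1, ∀ i : ℕ, 1 ≤ i → i ≤ ℓ →
      iteratedDeriv i (fun z => F₂ x 0 z) 0 = 0)
    (x₁ b c : ℝ) (hx₁ : x₁ ∈ Set.Ioo (-1 : ℝ) 1)
    (γ : ℝ → ℝ × ℝ × ℝ) (hγ : ContDiff ℝ (⊤ : ℕ∞) γ) (hγ0 : γ 0 = (x₁, 0, 0))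
    (hγ1 : (fun t => (γ t).1 - x₁) =O[nhds 0] fun t : ℝ => t)
    (hγ2 : (fun t => (γ t).2.1 - b * t ^ (ℓ + 1)) =O[nhds 0] fun t : ℝ => t ^ (ℓ + 2))
    (hγ3 : (fun t => (γ t).2.2 - c * t) =O[nhds 0] fun t : ℝ => t ^ 2) :
    ((fun t => F₁ (γ t).1 (γ t).2.1 (γ t).2.2 - lam₁ * x₁) =O[nhds 0] fun t : ℝ => t) ∧
    ((fun t => F₂ (γ t).1 (γ t).2.1 (γ t).2.2 -
        (lam₂ * b + (1 / ((ℓ + 1).factorial : ℝ)) *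
            iteratedDeriv (ℓ + 1) (fun z => F₂ x₁ 0 z) 0 * c ^ (ℓ + 1)) * t ^ (ℓ + 1))
      =O[nhds 0] fun t : ℝ => t ^ (ℓ + 2)) ∧
    ((fun t => F₃ (γ t).1 (γ t).2.1 (γ t).2.2 - lam₃ * c * t) =O[nhds 0] fun t : ℝ => t ^ 2) := by
  -- smoothness of components
  have hP₁ : ContDiff ℝ (⊤ : ℕ∞) (fun p : ℝ × ℝ × ℝ => F₁ p.1 p.2.1 p.2.2) :=
    contDiff_fst.comp hsmooth
  have hP₂ : ContDiff ℝ (⊤ : ℕ∞) (fun p : ℝ × ℝ × ℝ => F₂ p.1 p.2.1 p.2.2) :=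
    (contDiff_fst.comp contDiff_snd).comp hsmooth
  have hP₃ : ContDiff ℝ (⊤ : ℕ∞) (fun p : ℝ × ℝ × ℝ => F₃ p.1 p.2.1 p.2.2) :=
    (contDiff_snd.comp contDiff_snd).comp hsmooth
  have hγ₁s : ContDiff ℝ (⊤ : ℕ∞) (fun t : ℝ => (γ t).1) := contDiff_fst.comp hγ
  have hγ₂s : ContDiff ℝ (⊤ : ℕ∞) (fun t : ℝ => (γ t).2.1) :=
    (contDiff_fst.comp contDiff_snd).comp hγ
  have hγ₃s : ContDiff ℝ (⊤ : ℕ∞) (fun t : ℝ => (γ t).2.2) :=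
    (contDiff_snd.comp contDiff_snd).comp hγ
  have e1 : (γ 0).1 = x₁ := by rw [hγ0]
  have e2 : (γ 0).2.1 = 0 := by rw [hγ0]
  have e3 : (γ 0).2.2 = 0 := by rw [hγ0]
  -- tendsto facts
  have tendγ : Tendsto γ (nhds 0) (nhds (x₁, 0, 0)) := by
    have := hγ.continuous.tendsto 0
    rwa [hγ0] at this
  have tend₁ : Tendsto (fun t : ℝ => (γ t).1) (nhds 0) (nhds x₁) :=
    (continuous_fst.tendsto _).comp tendγ
  have tend₂ : Tendsto (fun t : ℝ => (γ t).2.1) (nhds 0) (nhds 0) :=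
    ((continuous_fst.comp continuous_snd).tendsto _).comp tendγ
  have tend₃ : Tendsto (fun t : ℝ => (γ t).2.2) (nhds 0) (nhds 0) :=
    ((continuous_snd.comp continuous_snd).tendsto _).comp tendγ
  have tendq : Tendsto (fun t : ℝ => ((γ t).1, (γ t).2.2)) (nhds 0) (nhds (x₁, 0)) :=
    tend₁.prodMk_nhds tend₃
  -- big-O facts for coordinates
  have hγ₂O : (fun t : ℝ => (γ t).2.1) =O[nhds 0] fun t : ℝ => t ^ (ℓ + 1) := by
    have h1 : (fun t : ℝ => b * t ^ (ℓ + 1)) =O[nhds 0] fun t : ℝ => t ^ (ℓ + 1) :=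
      (isBigO_refl _ _).const_mul_left b
    have h2 := (hγ2.trans (aux_pow_isBigO (Nat.le_succ _))).add h1
    simpa using h2
  have ht21 : (fun t : ℝ => t ^ 2) =O[nhds 0] fun t : ℝ => t := by
    have := aux_pow_isBigO (show 1 ≤ 2 by norm_num) (m := 2)
    simpa [pow_one] using this
  have hγ₃O : (fun t : ℝ => (γ t).2.2) =O[nhds 0] fun t : ℝ => t := by
    have h1 : (fun t : ℝ => c * t) =O[nhds 0] fun t : ℝ => t :=
      (isBigO_refl _ _).const_mul_left c
    have h2 := (hγ3.trans ht21).add h1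
    simpa using h2
  -- Part 1
  have part1 : (fun t => F₁ (γ t).1 (γ t).2.1 (γ t).2.2 - lam₁ * x₁) =O[nhds 0]
      fun t : ℝ => t := by
    have hg : ContDiff ℝ (⊤ : ℕ∞) (fun t => F₁ (γ t).1 (γ t).2.1 (γ t).2.2) := hP₁.comp hγ
    have h := aux_isBigO_id _ ((hg.differentiable (by simp)).differentiableAt (x := 0))
    have hv : F₁ (γ 0).1 (γ 0).2.1 (γ 0).2.2 = lam₁ * x₁ := by
      rw [e1, e2, e3]; exact haxis₁ x₁ hx₁
    rwa [hv] at h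
  refine ⟨part1, ?_, ?_⟩
  -- PART 2
  · -- the y-partial of F₂ along (x,0,z)
    have hA2s : ContDiff ℝ (⊤ : ℕ∞) (fun p : (ℝ × ℝ) × ℝ => F₂ p.1.1 p.2 p.1.2) :=
      hP₂.comp ((contDiff_fst.comp contDiff_fst).prodMk
        (contDiff_snd.prodMk (contDiff_snd.comp contDiff_fst)))
    set A : ℝ × ℝ → ℝ := fun q => deriv (fun y => F₂ q.1 y q.2) 0 with hAdef
    have hAs : ContDiff ℝ (⊤ : ℕ∞) A :=
      (aux_deriv_smooth (fun (q : ℝ × ℝ) (y : ℝ) => F₂ q.1 y q.2) hA2s).comp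
        (contDiff_id.prodMk contDiff_const)
    have hG2s : ContDiff ℝ (⊤ : ℕ∞) (fun p : ℝ × ℝ => F₂ p.1 0 p.2) :=
      hP₂.comp (contDiff_fst.prodMk (contDiff_const.prodMk contDiff_snd))
    set W : ℝ → ℝ := fun x => iteratedDeriv (ℓ + 1) (fun z => F₂ x 0 z) 0 with hWdef
    have hWs : ContDiff ℝ (⊤ : ℕ∞) W :=
      (aux_iteratedDeriv_smooth (ℓ + 1) (fun (x : ℝ) (z : ℝ) => F₂ x 0 z) hG2s).comp
        (contDiff_id.prodMk contDiff_const)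
    set w : ℝ → ℝ := fun x => (1 / ((ℓ + 1).factorial : ℝ)) * W x with hwdef
    have hws : ContDiff ℝ (⊤ : ℕ∞) w := contDiff_const.mul hWs
    -- piece 2a
    have h2a : (fun t => F₂ (γ t).1 (γ t).2.1 (γ t).2.2 - F₂ (γ t).1 0 (γ t).2.2
        - (γ t).2.1 * A ((γ t).1, (γ t).2.2)) =O[nhds 0] fun t : ℝ => t ^ (ℓ + 2) := by
      have hKs : ContDiff ℝ (⊤ : ℕ∞) (fun p : (ℝ × ℝ) × ℝ =>
          F₂ p.1.1 p.2 p.1.2 - F₂ p.1.1 0 p.1.2 - p.2 * A p.1) := by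
        refine (hA2s.sub ?_).sub (contDiff_snd.mul (hAs.comp contDiff_fst))
        exact hG2s.comp contDiff_fst
      have hvanK : ∀ q ∈ closedBall ((x₁ : ℝ), (0 : ℝ)) 1, ∀ i ≤ 1,
          iteratedDeriv i (fun y => F₂ q.1 y q.2 - F₂ q.1 0 q.2 - y * A q) 0 = 0 := by
        intro q _ i hi
        interval_cases i
        · simp [iteratedDeriv_zero]
        · have d1 : DifferentiableAt ℝ (fun y => F₂ q.1 y q.2) 0 := by
            have : ContDiff ℝ (⊤ : ℕ∞) (fun y : ℝ => F₂ q.1 y q.2) :=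
              hA2s.comp ((contDiff_const (c := q)).prodMk contDiff_id)
            exact (this.differentiable (by simp)).differentiableAt
          have hmc : HasDerivAt (fun y : ℝ => y * A q) (A q) 0 := by
            simpa using (hasDerivAt_id (0 : ℝ)).mul_const (A q)
          have hd := ((d1.hasDerivAt.sub_const (F₂ q.1 0 q.2)).fun_sub hmc).deriv
          rw [iteratedDeriv_one, hd]
          exact sub_self _
      obtain ⟨C, δ, hδ, _, hbd⟩ := aux_bound 1
        (fun (q : ℝ × ℝ) (y : ℝ) => F₂ q.1 y q.2 - F₂ q.1 0 q.2 - y * A q) hKs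
        (x₁, 0) 1 one_pos hvanK
      have hOγ : (fun t => F₂ (γ t).1 (γ t).2.1 (γ t).2.2 - F₂ (γ t).1 0 (γ t).2.2
          - (γ t).2.1 * A ((γ t).1, (γ t).2.2)) =O[nhds 0]
          fun t => ((γ t).2.1) ^ 2 := by
        apply IsBigO.of_bound C
        filter_upwards [tendq (Metric.closedBall_mem_nhds _ hδ),
          tend₂ (Metric.closedBall_mem_nhds _ hδ)] with t h1 h2
        simp only [Set.mem_preimage, Metric.mem_closedBall, Real.dist_eq, sub_zero] at h2
        have := hbd _ h1 _ h2
        rw [Real.norm_eq_abs, Real.norm_eq_abs, abs_pow]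
        simpa using this
      refine hOγ.trans ((hγ₂O.pow 2).trans ?_)
      have e : (fun t : ℝ => (t ^ (ℓ + 1)) ^ 2) = fun t : ℝ => t ^ ((ℓ + 1) * 2) := by
        funext t; rw [← pow_mul]
      rw [e]
      exact aux_pow_isBigO (by omega)
    -- piece 2b
    have h2b : (fun t => (γ t).2.1 * (A ((γ t).1, (γ t).2.2) - lam₂)) =O[nhds 0]
        fun t : ℝ => t ^ (ℓ + 2) := by
      have hc : ContDiff ℝ (⊤ : ℕ∞) (fun t : ℝ => A ((γ t).1, (γ t).2.2)) :=
        hAs.comp (hγ₁s.prodMk hγ₃s)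
      have h := aux_isBigO_id _ ((hc.differentiable (by simp)).differentiableAt (x := 0))
      have hv : A ((γ 0).1, (γ 0).2.2) = lam₂ := by
        rw [e1, e3, hAdef]; exact h22 x₁ hx₁
      rw [hv] at h
      have := hγ₂O.mul h
      have e : (fun t : ℝ => t ^ (ℓ + 1) * t) = fun t : ℝ => t ^ (ℓ + 2) := by
        funext t; rw [← pow_succ]
      rwa [e] at this
    -- piece 2c
    have h2c : (fun t => lam₂ * ((γ t).2.1 - b * t ^ (ℓ + 1))) =O[nhds 0]
        fun t : ℝ => t ^ (ℓ + 2) := hγ2.const_mul_left lam₂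
    -- piece 2d
    have h2d : (fun t => F₂ (γ t).1 0 (γ t).2.2 - w ((γ t).1) * ((γ t).2.2) ^ (ℓ + 1))
        =O[nhds 0] fun t : ℝ => t ^ (ℓ + 2) := by
      set ε₁ : ℝ := min (x₁ + 1) (1 - x₁) / 2 with hε₁def
      have hε₁ : 0 < ε₁ := by
        have h1 : 0 < x₁ + 1 := by linarith [hx₁.1]
        have h2 : 0 < 1 - x₁ := by linarith [hx₁.2]
        exact div_pos (lt_min h1 h2) two_pos
      have hball : ∀ x ∈ closedBall x₁ ε₁, x ∈ Set.Ioo (-1 : ℝ) 1 := by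
        intro x hx
        rw [Metric.mem_closedBall, Real.dist_eq] at hx
        have hx' := abs_le.mp hx
        constructor <;>
          linarith [hx'.1, hx'.2, min_le_left (x₁ + 1) (1 - x₁),
            min_le_right (x₁ + 1) (1 - x₁)]
      have hHs : ContDiff ℝ (⊤ : ℕ∞) (fun p : ℝ × ℝ =>
          F₂ p.1 0 p.2 - w p.1 * p.2 ^ (ℓ + 1)) :=
        hG2s.sub ((hws.comp contDiff_fst).mul (contDiff_snd.pow _))
      have hvanH : ∀ x ∈ closedBall x₁ ε₁, ∀ i ≤ ℓ + 1,
          iteratedDeriv i (fun z => F₂ x 0 z - w x * z ^ (ℓ + 1)) 0 = 0 := by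
        intro x hx i hi
        have hxI := hball x hx
        have hfs : ContDiff ℝ (⊤ : ℕ∞) (fun z : ℝ => F₂ x 0 z) :=
          hG2s.comp ((contDiff_const (c := x)).prodMk contDiff_id)
        have hgs : ContDiff ℝ (⊤ : ℕ∞) (fun z : ℝ => w x * z ^ (ℓ + 1)) :=
          contDiff_const.mul (contDiff_id.pow _)
        rw [aux_iteratedDeriv_sub _ _ hfs hgs]
        simp only [aux_monomial]
        rcases eq_or_lt_of_le hi with rfl | hlt
        · rw [Nat.descFactorial_self, Nat.sub_self, pow_zero, mul_one]
          have hW : iteratedDeriv (ℓ + 1) (fun z => F₂ x 0 z) 0 = W x := rfl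
          rw [hW, hwdef]
          have : ((ℓ + 1).factorial : ℝ) ≠ 0 := Nat.cast_ne_zero.mpr (Nat.factorial_ne_zero _)
          field_simp
          simp
        · have hiℓ : i ≤ ℓ := by omega
          have hz1 : iteratedDeriv i (fun z => F₂ x 0 z) 0 = 0 := by
            rcases Nat.eq_zero_or_pos i with rfl | hipos
            · simpa [iteratedDeriv_zero] using haxis₂ x hxI
            · exact hvan x hxI i hipos hiℓ
          have hz2 : (0 : ℝ) ^ (ℓ + 1 - i) = 0 := by
            apply zero_pow; omega
          rw [hz1, hz2, mul_zero, sub_zero]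
      obtain ⟨C, δ, hδ, _, hbd⟩ := aux_bound (ℓ + 1)
        (fun (x : ℝ) (z : ℝ) => F₂ x 0 z - w x * z ^ (ℓ + 1)) hHs x₁ ε₁ hε₁ hvanH
      have hOγ : (fun t => F₂ (γ t).1 0 (γ t).2.2 - w ((γ t).1) * ((γ t).2.2) ^ (ℓ + 1))
          =O[nhds 0] fun t => ((γ t).2.2) ^ (ℓ + 2) := by
        apply IsBigO.of_bound C
        filter_upwards [tend₁ (Metric.closedBall_mem_nhds _ hδ),
          tend₃ (Metric.closedBall_mem_nhds _ hδ)] with t h1 h2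
        simp only [Set.mem_preimage, Metric.mem_closedBall, Real.dist_eq, sub_zero] at h2
        have := hbd _ h1 _ h2
        rw [Real.norm_eq_abs, Real.norm_eq_abs, abs_pow]
        simpa using this
      exact hOγ.trans (hγ₃O.pow (ℓ + 2))
    -- piece 2e
    have h2e : (fun t => (w ((γ t).1) - w x₁) * ((γ t).2.2) ^ (ℓ + 1)) =O[nhds 0]
        fun t : ℝ => t ^ (ℓ + 2) := by
      have hc : ContDiff ℝ (⊤ : ℕ∞) (fun t : ℝ => w ((γ t).1)) := hws.comp hγ₁s
      have h := aux_isBigO_id _ ((hc.differentiable (by simp)).differentiableAt (x := 0))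
      rw [e1] at h
      have := h.mul (hγ₃O.pow (ℓ + 1))
      have e : (fun t : ℝ => t * t ^ (ℓ + 1)) = fun t : ℝ => t ^ (ℓ + 2) := by
        funext t; rw [← pow_succ']
      rwa [e] at this
    -- piece 2f
    have h2f : (fun t => w x₁ * (((γ t).2.2) ^ (ℓ + 1) - c ^ (ℓ + 1) * t ^ (ℓ + 1)))
        =O[nhds 0] fun t : ℝ => t ^ (ℓ + 2) :=
      (aux_pow_curve _ c hγ₃O hγ3 (ℓ + 1)).const_mul_left (w x₁)
    have hsum := ((((h2a.add h2b).add h2c).add h2d).add h2e).add h2f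
    have heq : (fun t => F₂ (γ t).1 (γ t).2.1 (γ t).2.2 -
        (lam₂ * b + (1 / ((ℓ + 1).factorial : ℝ)) *
            iteratedDeriv (ℓ + 1) (fun z => F₂ x₁ 0 z) 0 * c ^ (ℓ + 1)) * t ^ (ℓ + 1))
        =ᶠ[nhds 0] fun t =>
          (F₂ (γ t).1 (γ t).2.1 (γ t).2.2 - F₂ (γ t).1 0 (γ t).2.2
            - (γ t).2.1 * A ((γ t).1, (γ t).2.2)
          + (γ t).2.1 * (A ((γ t).1, (γ t).2.2) - lam₂)
          + lam₂ * ((γ t).2.1 - b * t ^ (ℓ + 1))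
          + (F₂ (γ t).1 0 (γ t).2.2 - w ((γ t).1) * ((γ t).2.2) ^ (ℓ + 1))
          + (w ((γ t).1) - w x₁) * ((γ t).2.2) ^ (ℓ + 1)
          + w x₁ * (((γ t).2.2) ^ (ℓ + 1) - c ^ (ℓ + 1) * t ^ (ℓ + 1))) := by
      apply Filter.Eventually.of_forall
      intro t
      have hWx : iteratedDeriv (ℓ + 1) (fun z => F₂ x₁ 0 z) 0 = W x₁ := rfl
      rw [hWx, hwdef]
      ring
    exact heq.trans_isBigO hsum
  -- PART 3
  · have hB2s : ContDiff ℝ (⊤ : ℕ∞) (fun p : (ℝ × ℝ) × ℝ => F₃ p.1.1 p.2 p.1.2) :=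
      hP₃.comp ((contDiff_fst.comp contDiff_fst).prodMk
        (contDiff_snd.prodMk (contDiff_snd.comp contDiff_fst)))
    set B : ℝ × ℝ → ℝ := fun q => deriv (fun y => F₃ q.1 y q.2) 0 with hBdef
    have hBs : ContDiff ℝ (⊤ : ℕ∞) B :=
      (aux_deriv_smooth (fun (q : ℝ × ℝ) (y : ℝ) => F₃ q.1 y q.2) hB2s).comp
        (contDiff_id.prodMk contDiff_const)
    have hG3s : ContDiff ℝ (⊤ : ℕ∞) (fun p : ℝ × ℝ => F₃ p.1 0 p.2) :=
      hP₃.comp (contDiff_fst.prodMk (contDiff_const.prodMk contDiff_snd))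
    set V : ℝ → ℝ := fun x => deriv (fun z => F₃ x 0 z) 0 with hVdef
    have hVs : ContDiff ℝ (⊤ : ℕ∞) V :=
      (aux_deriv_smooth (fun (x : ℝ) (z : ℝ) => F₃ x 0 z) hG3s).comp
        (contDiff_id.prodMk contDiff_const)
    -- piece 3a
    have h3a : (fun t => F₃ (γ t).1 (γ t).2.1 (γ t).2.2 - F₃ (γ t).1 0 (γ t).2.2
        - (γ t).2.1 * B ((γ t).1, (γ t).2.2)) =O[nhds 0] fun t : ℝ => t ^ 2 := by
      have hKs : ContDiff ℝ (⊤ : ℕ∞) (fun p : (ℝ × ℝ) × ℝ =>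
          F₃ p.1.1 p.2 p.1.2 - F₃ p.1.1 0 p.1.2 - p.2 * B p.1) := by
        refine (hB2s.sub ?_).sub (contDiff_snd.mul (hBs.comp contDiff_fst))
        exact hG3s.comp contDiff_fst
      have hvanK : ∀ q ∈ closedBall ((x₁ : ℝ), (0 : ℝ)) 1, ∀ i ≤ 1,
          iteratedDeriv i (fun y => F₃ q.1 y q.2 - F₃ q.1 0 q.2 - y * B q) 0 = 0 := by
        intro q _ i hi
        interval_cases i
        · simp [iteratedDeriv_zero]
        · have d1 : DifferentiableAt ℝ (fun y => F₃ q.1 y q.2) 0 := by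
            have : ContDiff ℝ (⊤ : ℕ∞) (fun y : ℝ => F₃ q.1 y q.2) :=
              hB2s.comp ((contDiff_const (c := q)).prodMk contDiff_id)
            exact (this.differentiable (by simp)).differentiableAt
          have hmc : HasDerivAt (fun y : ℝ => y * B q) (B q) 0 := by
            simpa using (hasDerivAt_id (0 : ℝ)).mul_const (B q)
          have hd := ((d1.hasDerivAt.sub_const (F₃ q.1 0 q.2)).fun_sub hmc).deriv
          rw [iteratedDeriv_one, hd]
          exact sub_self _
      obtain ⟨C, δ, hδ, _, hbd⟩ := aux_bound 1
        (fun (q : ℝ × ℝ) (y : ℝ) => F₃ q.1 y q.2 - F₃ q.1 0 q.2 - y * B q) hKs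
        (x₁, 0) 1 one_pos hvanK
      have hOγ : (fun t => F₃ (γ t).1 (γ t).2.1 (γ t).2.2 - F₃ (γ t).1 0 (γ t).2.2
          - (γ t).2.1 * B ((γ t).1, (γ t).2.2)) =O[nhds 0]
          fun t => ((γ t).2.1) ^ 2 := by
        apply IsBigO.of_bound C
        filter_upwards [tendq (Metric.closedBall_mem_nhds _ hδ),
          tend₂ (Metric.closedBall_mem_nhds _ hδ)] with t h1 h2
        simp only [Set.mem_preimage, Metric.mem_closedBall, Real.dist_eq, sub_zero] at h2
        have := hbd _ h1 _ h2
        rw [Real.norm_eq_abs, Real.norm_eq_abs, abs_pow]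
        simpa using this
      refine hOγ.trans ((hγ₂O.pow 2).trans ?_)
      have e : (fun t : ℝ => (t ^ (ℓ + 1)) ^ 2) = fun t : ℝ => t ^ ((ℓ + 1) * 2) := by
        funext t; rw [← pow_mul]
      rw [e]
      exact aux_pow_isBigO (by omega)
    -- piece 3b
    have h3b : (fun t => (γ t).2.1 * B ((γ t).1, (γ t).2.2)) =O[nhds 0]
        fun t : ℝ => t ^ 2 := by
      have hc : ContDiff ℝ (⊤ : ℕ∞) (fun t : ℝ => B ((γ t).1, (γ t).2.2)) :=
        hBs.comp (hγ₁s.prodMk hγ₃s)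
      have h := aux_isBigO_id _ ((hc.differentiable (by simp)).differentiableAt (x := 0))
      have hv : B ((γ 0).1, (γ 0).2.2) = 0 := by
        rw [e1, e3, hBdef]; exact h23 x₁ hx₁
      rw [hv, ] at h
      simp only [sub_zero] at h
      have := hγ₂O.mul h
      refine this.trans ?_
      have e : (fun t : ℝ => t ^ (ℓ + 1) * t) = fun t : ℝ => t ^ (ℓ + 2) := by
        funext t; rw [← pow_succ]
      rw [e]
      exact aux_pow_isBigO (by omega)
    -- piece 3c
    have h3c : (fun t => F₃ (γ t).1 0 (γ t).2.2 - (γ t).2.2 * V ((γ t).1)) =O[nhds 0]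
        fun t : ℝ => t ^ 2 := by
      set ε₁ : ℝ := min (x₁ + 1) (1 - x₁) / 2 with hε₁def
      have hε₁ : 0 < ε₁ := by
        have h1 : 0 < x₁ + 1 := by linarith [hx₁.1]
        have h2 : 0 < 1 - x₁ := by linarith [hx₁.2]
        exact div_pos (lt_min h1 h2) two_pos
      have hball : ∀ x ∈ closedBall x₁ ε₁, x ∈ Set.Ioo (-1 : ℝ) 1 := by
        intro x hx
        rw [Metric.mem_closedBall, Real.dist_eq] at hx
        have hx' := abs_le.mp hx
        constructor <;>
          linarith [hx'.1, hx'.2, min_le_left (x₁ + 1) (1 - x₁),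
            min_le_right (x₁ + 1) (1 - x₁)]
      have hHs : ContDiff ℝ (⊤ : ℕ∞) (fun p : ℝ × ℝ => F₃ p.1 0 p.2 - p.2 * V p.1) :=
        hG3s.sub (contDiff_snd.mul (hVs.comp contDiff_fst))
      have hvanH : ∀ x ∈ closedBall x₁ ε₁, ∀ i ≤ 1,
          iteratedDeriv i (fun z => F₃ x 0 z - z * V x) 0 = 0 := by
        intro x hx i hi
        have hxI := hball x hx
        interval_cases i
        · simpa [iteratedDeriv_zero] using haxis₃ x hxI
        · have d1 : DifferentiableAt ℝ (fun z => F₃ x 0 z) 0 := by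
            have : ContDiff ℝ (⊤ : ℕ∞) (fun z : ℝ => F₃ x 0 z) :=
              hG3s.comp ((contDiff_const (c := x)).prodMk contDiff_id)
            exact (this.differentiable (by simp)).differentiableAt
          have hmc : HasDerivAt (fun z : ℝ => z * V x) (V x) 0 := by
            simpa using (hasDerivAt_id (0 : ℝ)).mul_const (V x)
          have hd := (d1.hasDerivAt.fun_sub hmc).deriv
          rw [iteratedDeriv_one, hd]
          exact sub_self _
      obtain ⟨C, δ, hδ, _, hbd⟩ := aux_bound 1
        (fun (x : ℝ) (z : ℝ) => F₃ x 0 z - z * V x) hHs x₁ ε₁ hε₁ hvanH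
      have hOγ : (fun t => F₃ (γ t).1 0 (γ t).2.2 - (γ t).2.2 * V ((γ t).1)) =O[nhds 0]
          fun t => ((γ t).2.2) ^ 2 := by
        apply IsBigO.of_bound C
        filter_upwards [tend₁ (Metric.closedBall_mem_nhds _ hδ),
          tend₃ (Metric.closedBall_mem_nhds _ hδ)] with t h1 h2
        simp only [Set.mem_preimage, Metric.mem_closedBall, Real.dist_eq, sub_zero] at h2
        have := hbd _ h1 _ h2
        rw [Real.norm_eq_abs, Real.norm_eq_abs, abs_pow]
        simpa using this
      exact hOγ.trans (hγ₃O.pow 2)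
    -- piece 3d
    have h3d : (fun t => (γ t).2.2 * (V ((γ t).1) - lam₃)) =O[nhds 0]
        fun t : ℝ => t ^ 2 := by
      have hev : (fun t => (γ t).2.2 * (V ((γ t).1) - lam₃)) =ᶠ[nhds 0]
          (fun _ : ℝ => (0 : ℝ)) := by
        filter_upwards [tend₁ (isOpen_Ioo.mem_nhds hx₁)] with t ht
        have : V ((γ t).1) = lam₃ := h33 _ ht
        rw [this, sub_self, mul_zero]
      exact hev.trans_isBigO (isBigO_zero _ _)
    -- piece 3e
    have h3e : (fun t => lam₃ * ((γ t).2.2 - c * t)) =O[nhds 0] fun t : ℝ => t ^ 2 :=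
      hγ3.const_mul_left lam₃
    have hsum := (((h3a.add h3b).add h3c).add h3d).add h3e
    have heq : (fun t => F₃ (γ t).1 (γ t).2.1 (γ t).2.2 - lam₃ * c * t) =ᶠ[nhds 0]
        fun t =>
          (F₃ (γ t).1 (γ t).2.1 (γ t).2.2 - F₃ (γ t).1 0 (γ t).2.2
            - (γ t).2.1 * B ((γ t).1, (γ t).2.2)
          + (γ t).2.1 * B ((γ t).1, (γ t).2.2)
          + (F₃ (γ t).1 0 (γ t).2.2 - (γ t).2.2 * V ((γ t).1))
          + (γ t).2.2 * (V ((γ t).1) - lam₃)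
          + lam₃ * ((γ t).2.2 - c * t)) := by
      apply Filter.Eventually.of_forall
      intro t
      ring
    exact heq.trans_isBigO hsum
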